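/- Let X = {(0,0)} ∪ ⋃_{n≥1} {z ∈ ℝ² : ‖z‖ = 1/n}, equipped with the Euclidean metric, and let φ : ℝ × X → X be the rotation flow φ_t(x,y) = (x cos t − y sin t, x sin t + y cos t). Then φ is a well-defined flow on X which is not singular-expansive. -/

import Mathlib

open Set Metric Filter
open scoped Classical

variable {X : Type*}

/-- A (continuous) flow on a topological space, given as a map `φ : ℝ → X → X`. -/
def IsFlowMap [TopologicalSpace X] (φ : ℝ → X → X) : Prop :=
  Continuous (fun p : ℝ × X => φ p.1 p.2) ∧ (∀ x : X, φ 0 x = x) ∧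
    ∀ t s : ℝ, ∀ x : X, φ (t + s) x = φ t (φ s x)

/-- The singular set of a flow. -/
def SingSet (φ : ℝ → X → X) : Set X := {x : X | ∀ t : ℝ, φ t x = x}

/-- An increasing homeomorphism of `ℝ`: a strictly increasing continuous bijection. -/
def IncreasingHomeo (s : ℝ → ℝ) : Prop :=
  Continuous s ∧ StrictMono s ∧ Function.Bijective s

/-- Distance from a point to a set, with the convention that the distance
to the empty set is the diameter of the whole space. -/
noncomputable def distToSet [MetricSpace X] (z : X) (A : Set X) : ℝ :=
  if A = ∅ then Metric.diam (Set.univ : Set X) else Metric.infDist z A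

/-- The orbit of a point under a flow. -/
def flowOrbit (φ : ℝ → X → X) (x : X) : Set X := Set.range fun t : ℝ => φ t x

/-- Singular expansivity of a flow on a subset `Λ`. -/
def SingularExpansiveOn [MetricSpace X] (φ : ℝ → X → X) (Λ : Set X) : Prop :=
  ∀ ε > (0:ℝ), ∃ δ > (0:ℝ), ∀ x ∈ Λ, ∀ y ∈ Λ, ∀ s : ℝ → ℝ, IncreasingHomeo s →
    (∀ t : ℝ, dist (φ t x) (φ (s t) y) ≤ δ * distToSet (φ t x) (SingSet φ)) →
    ∃ t₀ : ℝ, ∃ τ ∈ Set.Icc (t₀ - ε) (t₀ + ε), φ (s t₀) y = φ τ x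

/-- The subset of the plane (identified with `ℂ`) consisting of the origin together
with the circles of radius `1/n`, `n ≥ 1`, centered at the origin. -/
def circlesInv : Set ℂ :=
  {0} ∪ ⋃ n : ℕ, {z : ℂ | ‖z‖ = 1 / ((n : ℝ) + 1)}

lemma rot_mem_circlesInv (t : ℝ) (z : ℂ) (hz : z ∈ circlesInv) :
    Complex.exp (t * Complex.I) * z ∈ circlesInv := by
  rcases hz with hz | hz
  · simp only [Set.mem_singleton_iff] at hz
    left
    simp [hz]
  · right
    simp only [Set.mem_iUnion, Set.mem_setOf_eq] at hz ⊢
    obtain ⟨n, hn⟩ := hz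
    refine ⟨n, ?_⟩
    rw [norm_mul, Complex.norm_exp_ofReal_mul_I, one_mul]
    exact hn

/-- The rotation flow on `circlesInv`. -/
noncomputable def rotFlowInv : ℝ → circlesInv → circlesInv := fun t z =>
  ⟨Complex.exp (t * Complex.I) * (z : ℂ), rot_mem_circlesInv t z z.2⟩


lemma zero_mem_circlesInv : (0:ℂ) ∈ circlesInv := Or.inl rfl

lemma singSet_rotFlowInv : SingSet rotFlowInv = {⟨0, zero_mem_circlesInv⟩} := by
  ext z
  constructor
  · intro hz
    have h2 : Complex.exp (Real.pi * Complex.I) * (z : ℂ) = (z : ℂ) :=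
      congrArg Subtype.val (hz Real.pi)
    rw [Complex.exp_pi_mul_I] at h2
    exact Subtype.ext (by linear_combination (-1/2 : ℂ) * h2)
  · rintro rfl t
    exact Subtype.ext (by simp [rotFlowInv])

lemma flow_cont : Continuous (fun p : ℝ × circlesInv => rotFlowInv p.1 p.2) := by
  apply Continuous.subtype_mk
  exact (Complex.continuous_exp.comp ((Complex.continuous_ofReal.comp continuous_fst).mul
    continuous_const)).mul (continuous_subtype_val.comp continuous_snd)

lemma mem_circle (r : ℝ) (k : ℕ) (hr : r = 1 / ((k:ℝ)+1)) : (r : ℂ) ∈ circlesInv := by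
  subst hr
  refine Or.inr (Set.mem_iUnion.2 ⟨k, ?_⟩)
  show ‖_‖ = _
  rw [Complex.norm_real, Real.norm_eq_abs, abs_of_nonneg (by positivity)]

/-- The rotation flow on the union of the origin and the circles of radii `1/n`, `n ≥ 1`,
is a well-defined flow which is not singular-expansive. -/
theorem rotation_flow_on_inv_circles_not_singular_expansive :
    IsFlowMap rotFlowInv ∧ ¬ SingularExpansiveOn rotFlowInv Set.univ := by
  refine ⟨⟨flow_cont, ?_, ?_⟩, ?_⟩
  · intro x
    apply Subtype.ext
    simp [rotFlowInv]
  · intro t s x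
    apply Subtype.ext
    show Complex.exp (((t+s:ℝ):ℂ) * Complex.I) * (x:ℂ)
        = Complex.exp ((t:ℂ) * Complex.I) * (Complex.exp ((s:ℂ) * Complex.I) * (x:ℂ))
    rw [Complex.ofReal_add, add_mul, Complex.exp_add, mul_assoc]
  · intro h
    obtain ⟨δ, hδ, h⟩ := h 1 one_pos
    obtain ⟨n, hn⟩ := exists_nat_gt (1/δ)
    set a : ℝ := 1 / ((n:ℝ)+1) with ha
    set b : ℝ := 1 / ((n:ℝ)+2) with hb
    have ha0 : (0:ℝ) < a := by positivity
    have hb0 : (0:ℝ) < b := by positivity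
    set x : circlesInv := ⟨(a : ℂ), mem_circle a n rfl⟩ with hx
    set y : circlesInv := ⟨(b : ℂ), mem_circle b (n+1) (by push_cast [hb]; ring_nf)⟩ with hy
    have hbδ : b < δ := by
      rw [hb, div_lt_iff₀ (by positivity)]
      rw [div_lt_iff₀ hδ] at hn
      nlinarith
    have hne : SingSet rotFlowInv ≠ ∅ := by
      rw [singSet_rotFlowInv]
      exact Set.singleton_ne_empty _
    have key : ∀ t : ℝ, dist (rotFlowInv t x) (rotFlowInv (id t) y)
        ≤ δ * distToSet (rotFlowInv t x) (SingSet rotFlowInv) := by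
      intro t
      have hd : dist (rotFlowInv t x) (rotFlowInv (id t) y) = a - b := by
        rw [Subtype.dist_eq]
        show dist (Complex.exp (t * Complex.I) * (a:ℂ)) (Complex.exp (t * Complex.I) * (b:ℂ)) = a - b
        rw [Complex.dist_eq, ← mul_sub, norm_mul, Complex.norm_exp_ofReal_mul_I, one_mul,
          ← Complex.ofReal_sub, Complex.norm_real, Real.norm_eq_abs, abs_of_nonneg (by
            rw [ha, hb]
            apply sub_nonneg.2
            apply one_div_le_one_div_of_le <;> nlinarith)]
      have hds : distToSet (rotFlowInv t x) (SingSet rotFlowInv) = a := by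
        rw [distToSet, if_neg hne, singSet_rotFlowInv, Metric.infDist_singleton,
          Subtype.dist_eq]
        show dist (Complex.exp (t * Complex.I) * (a:ℂ)) 0 = a
        rw [Complex.dist_eq, sub_zero, norm_mul, Complex.norm_exp_ofReal_mul_I, one_mul, Complex.norm_real, Real.norm_eq_abs,
          abs_of_pos ha0]
      rw [hd, hds]
      have hab : a - b = b * a := by
        rw [ha, hb]
        field_simp
        ring
      rw [hab]
      nlinarith
    obtain ⟨t₀, τ, -, heq⟩ := h x (Set.mem_univ x) y (Set.mem_univ y) id
      ⟨continuous_id, strictMono_id, Function.bijective_id⟩ key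
    have habs : ‖((rotFlowInv (id t₀) y : circlesInv) : ℂ)‖
        = ‖((rotFlowInv τ x : circlesInv) : ℂ)‖ := by rw [heq]
    have hb' : ‖((rotFlowInv (id t₀) y : circlesInv) : ℂ)‖ = b := by
      show ‖Complex.exp ((id t₀ : ℝ) * Complex.I) * (b:ℂ)‖ = b
      rw [norm_mul, Complex.norm_exp_ofReal_mul_I, one_mul, Complex.norm_real, Real.norm_eq_abs, abs_of_pos hb0]
    have ha' : ‖((rotFlowInv τ x : circlesInv) : ℂ)‖ = a := by
      show ‖Complex.exp ((τ:ℝ) * Complex.I) * (a:ℂ)‖ = a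
      rw [norm_mul, Complex.norm_exp_ofReal_mul_I, one_mul, Complex.norm_real, Real.norm_eq_abs, abs_of_pos ha0]
    rw [hb', ha', ha, hb] at habs
    field_simp at habs
    linarith
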